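/- Let M be a bi-infinite self-adjoint positive definite matrix with entries satisfying |M_{kl}| ≤ D e^{−λ|k−l|} for some λ > 0, bounded and boundedly invertible on ℓ²(ℤ) with A·I ≤ M ≤ B·I. Then there exist λ₂ > 0 and a constant C₂ depending only on λ, D, A, B such that |(M⁻¹)_{kl}| ≤ C₂ e^{−λ₂|k−l|}. -/

import Mathlib

set_option maxHeartbeats 2000000
set_option synthInstance.maxHeartbeats 400000

open scoped ComplexConjugate ENNReal

noncomputable section JaffardAux

namespace JaffardAux

abbrev H : Type := lp (fun _ : ℤ => ℂ) 2

def ee (i : ℤ) : H := lp.single 2 i (1 : ℂ)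

def ent (O : H →L[ℂ] H) (k l : ℤ) : ℂ := O (ee l) k

lemma inner_ee_left (k : ℤ) (f : H) : (inner ℂ (ee k) f : ℂ) = f k := by
  rw [ee, lp.inner_single_left]; simp [RCLike.inner_apply]

lemma norm_ee (k : ℤ) : ‖ee k‖ = 1 := by
  have := lp.norm_single (E := fun _ : ℤ => ℂ) (p := (2 : ℝ≥0∞)) (by norm_num) k (1 : ℂ)
  simpa [ee] using this

lemma inner_ent (O : H →L[ℂ] H) (k l : ℤ) :
    (inner ℂ (O (ee l)) (ee k) : ℂ) = conj (ent O k l) := by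
  rw [← inner_conj_symm, inner_ee_left]; rfl

lemma norm_inner_ent (O : H →L[ℂ] H) (k l : ℤ) :
    ‖(inner ℂ (O (ee l)) (ee k) : ℂ)‖ = ‖ent O k l‖ := by
  rw [inner_ent]; exact RCLike.norm_conj _

lemma norm_ent_le (O : H →L[ℂ] H) (k l : ℤ) : ‖ent O k l‖ ≤ ‖O‖ := by
  rw [show ent O k l = inner ℂ (ee k) (O (ee l)) from (inner_ee_left _ _).symm]
  calc ‖(inner ℂ (ee k) (O (ee l)) : ℂ)‖ ≤ ‖ee k‖ * ‖O (ee l)‖ := norm_inner_le_norm _ _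
    _ = ‖O (ee l)‖ := by rw [norm_ee, one_mul]
    _ ≤ ‖O‖ * ‖ee l‖ := O.le_opNorm _
    _ = ‖O‖ := by rw [norm_ee, mul_one]

lemma ent_one (k l : ℤ) : ent (1 : H →L[ℂ] H) k l = if k = l then 1 else 0 := by
  rw [ent, ContinuousLinearMap.one_apply, ee]
  by_cases h : k = l
  · subst h; simp [lp.single_apply_self]
  · simp [lp.single_apply_ne _ _ _ h, h]

lemma ent_sub (O₁ O₂ : H →L[ℂ] H) (k l : ℤ) :
    ent (O₁ - O₂) k l = ent O₁ k l - ent O₂ k l := by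
  simp [ent, ContinuousLinearMap.sub_apply, lp.coeFn_sub]

lemma ent_smul (c : ℂ) (O : H →L[ℂ] H) (k l : ℤ) :
    ent (c • O) k l = c * ent O k l := by
  simp [ent, ContinuousLinearMap.smul_apply, lp.coeFn_smul]

lemma hasSum_ent_mul (O₁ O₂ : H →L[ℂ] H) (k l : ℤ) :
    HasSum (fun m : ℤ => ent O₁ k m * ent O₂ m l) (ent (O₁ * O₂) k l) := by
  have h1 : HasSum (fun m : ℤ => lp.single 2 m ((O₂ (ee l)) m)) (O₂ (ee l)) :=
    lp.hasSum_single ENNReal.ofNat_ne_top _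
  have h2 : HasSum (fun m : ℤ => O₁ (lp.single 2 m ((O₂ (ee l)) m))) (O₁ (O₂ (ee l))) :=
    O₁.hasSum h1
  have h3 : HasSum (fun m : ℤ => (inner ℂ (ee k) (O₁ (lp.single 2 m ((O₂ (ee l)) m))) : ℂ))
      ((inner ℂ (ee k) (O₁ (O₂ (ee l))) : ℂ)) := (innerSL ℂ (ee k)).hasSum h2
  have key : ∀ m : ℤ, (inner ℂ (ee k) (O₁ (lp.single 2 m ((O₂ (ee l)) m))) : ℂ)
      = ent O₁ k m * ent O₂ m l := by
    intro m
    have hs : lp.single 2 m ((O₂ (ee l)) m) = ((O₂ (ee l)) m : ℂ) • ee m := by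
      simp only [ee, ← lp.single_smul, smul_eq_mul, mul_one]
    rw [hs, map_smul, inner_smul_right, inner_ee_left]
    rw [ent, ent]; ring
  have h4 : (inner ℂ (ee k) (O₁ (O₂ (ee l))) : ℂ) = ent (O₁ * O₂) k l := by
    rw [inner_ee_left]; rfl
  rw [← h4]
  exact h3.congr_fun (fun m => (key m).symm)

lemma summable_exp_abs {μ : ℝ} (hμ : 0 < μ) :
    Summable (fun j : ℤ => Real.exp (-μ * |(j : ℝ)|)) := by
  have hgeom : Summable (fun n : ℕ => Real.exp (-μ) ^ n) :=
    summable_geometric_of_lt_one (Real.exp_nonneg _)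
      (Real.exp_lt_one_iff.mpr (by linarith))
  have hnat : Summable (fun n : ℕ => Real.exp (-μ * |((n : ℤ) : ℝ)|)) := by
    refine hgeom.congr fun n => ?_
    rw [← Real.exp_nat_mul]
    congr 1
    push_cast
    rw [abs_of_nonneg (by positivity)]
    ring
  have hneg : Summable (fun n : ℕ => Real.exp (-μ * |((-(n : ℤ)) : ℝ)|)) := by
    refine hgeom.congr fun n => ?_
    rw [← Real.exp_nat_mul]
    congr 1
    push_cast
    rw [abs_neg, abs_of_nonneg (by positivity)]
    ring
  refine Summable.of_nat_of_neg hnat (hneg.congr fun n => ?_)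
  push_cast
  ring_nf

lemma hasSum_exp_shift {μ : ℝ} (hμ : 0 < μ) (k : ℤ) :
    HasSum (fun m : ℤ => Real.exp (-μ * |(k : ℝ) - (m : ℝ)|))
      (∑' j : ℤ, Real.exp (-μ * |(j : ℝ)|)) := by
  have h := (summable_exp_abs hμ).hasSum
  have := (Equiv.subLeft k).hasSum_iff
    (f := fun j : ℤ => Real.exp (-μ * |(j : ℝ)|))
    (a := ∑' j : ℤ, Real.exp (-μ * |(j : ℝ)|))
  rw [← this] at h
  refine h.congr_fun fun m => ?_
  simp only [Function.comp, Equiv.subLeft_apply]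
  push_cast
  ring_nf

lemma one_le_K {μ : ℝ} (hμ : 0 < μ) :
    1 ≤ ∑' j : ℤ, Real.exp (-μ * |(j : ℝ)|) := by
  have h := (summable_exp_abs hμ)
  have := Summable.le_tsum h 0 (fun j _ => (Real.exp_pos _).le)
  simpa using this

lemma min_le_rpow_interp {x y θ : ℝ} (hx : 0 ≤ x) (hy : 0 ≤ y)
    (hθ0 : 0 ≤ θ) (hθ1 : θ ≤ 1) :
    min x y ≤ x ^ (1 - θ) * y ^ θ := by
  rcases le_total x y with h | h
  · rw [min_eq_left h]
    calc x = x ^ (1 - θ) * x ^ θ := by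
          rw [← Real.rpow_add' hx (by norm_num), sub_add_cancel, Real.rpow_one]
      _ ≤ x ^ (1 - θ) * y ^ θ :=
          mul_le_mul_of_nonneg_left (Real.rpow_le_rpow hx h hθ0)
            (Real.rpow_nonneg hx _)
  · rw [min_eq_right h]
    calc y = y ^ (1 - θ) * y ^ θ := by
          rw [← Real.rpow_add' hy (by norm_num), sub_add_cancel, Real.rpow_one]
      _ ≤ x ^ (1 - θ) * y ^ θ :=
          mul_le_mul_of_nonneg_right (Real.rpow_le_rpow hy h (by linarith))
            (Real.rpow_nonneg hy _)

lemma norm_one_sub_smul_le (T : H →L[ℂ] H) (A : ℝ) (hA : 0 < A)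
    (hlow : ∀ f, A * ‖f‖ ^ 2 ≤ (inner ℂ (T f) f : ℂ).re) (hN : 0 < ‖T‖) :
    ‖(1 : H →L[ℂ] H) - ((A / ‖T‖ ^ 2 : ℝ) : ℂ) • T‖
      ≤ Real.sqrt (1 - A ^ 2 / ‖T‖ ^ 2) := by
  set t : ℝ := A / ‖T‖ ^ 2 with ht
  have htpos : 0 < t := div_pos hA (by positivity)
  refine ContinuousLinearMap.opNorm_le_bound _ (Real.sqrt_nonneg _) fun f => ?_
  have hexp : ‖f - ((t : ℂ) • T) f‖ ^ 2
      = ‖f‖ ^ 2 - 2 * t * (inner ℂ (T f) f : ℂ).re + t ^ 2 * ‖T f‖ ^ 2 := by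
    rw [norm_sub_sq (𝕜 := ℂ)]
    have h1 : (inner ℂ f (((t : ℂ) • T) f) : ℂ).re = t * (inner ℂ (T f) f : ℂ).re := by
      rw [ContinuousLinearMap.smul_apply, inner_smul_right, Complex.re_ofReal_mul]
      congr 1
      exact_mod_cast inner_re_symm (𝕜 := ℂ) f (T f)
    have h2 : ‖((t : ℂ) • T) f‖ ^ 2 = t ^ 2 * ‖T f‖ ^ 2 := by
      rw [ContinuousLinearMap.smul_apply, norm_smul, Complex.norm_real,
        Real.norm_eq_abs, abs_of_pos htpos, mul_pow]
    simp only [RCLike.re_to_complex] at h1 ⊢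
    rw [h1, h2]; ring
  have hTf : ‖T f‖ ^ 2 ≤ ‖T‖ ^ 2 * ‖f‖ ^ 2 := by
    rw [← mul_pow]
    exact pow_le_pow_left₀ (norm_nonneg _) (T.le_opNorm f) 2
  have hb : ‖f - ((t : ℂ) • T) f‖ ^ 2 ≤ (1 - A ^ 2 / ‖T‖ ^ 2) * ‖f‖ ^ 2 := by
    rw [hexp]
    have h3 : A * ‖f‖ ^ 2 ≤ (inner ℂ (T f) f : ℂ).re := hlow f
    have h4 : (1 : ℝ) - 2 * t * A + t ^ 2 * ‖T‖ ^ 2 = 1 - A ^ 2 / ‖T‖ ^ 2 := by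
      rw [ht]; field_simp; ring
    nlinarith [sq_nonneg ‖f‖, sq_nonneg t]
  have hnn : (0 : ℝ) ≤ ‖f - ((t : ℂ) • T) f‖ := norm_nonneg _
  have := Real.sqrt_le_sqrt hb
  rw [Real.sqrt_sq hnn, Real.sqrt_mul' _ (sq_nonneg ‖f‖), Real.sqrt_sq (norm_nonneg f)] at this
  calc ‖((1 : H →L[ℂ] H) - ((t : ℝ) : ℂ) • T) f‖
      = ‖f - ((t : ℂ) • T) f‖ := by
        rw [ContinuousLinearMap.sub_apply, ContinuousLinearMap.one_apply]
    _ ≤ Real.sqrt (1 - A ^ 2 / ‖T‖ ^ 2) * ‖f‖ := this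

lemma ent_pow_bound (S : H →L[ℂ] H) (d lam : ℝ) (hd : 1 ≤ d) (hlam : 0 < lam)
    (hS : ∀ k l : ℤ, ‖ent S k l‖ ≤ d * Real.exp (-lam * |(k : ℝ) - (l : ℝ)|)) :
    ∀ n : ℕ, ∀ k l : ℤ, ‖ent (S ^ n) k l‖
      ≤ (d * ∑' j : ℤ, Real.exp (-(lam / 2) * |(j : ℝ)|)) ^ n
        * Real.exp (-(lam / 2) * |(k : ℝ) - (l : ℝ)|) := by
  set μ : ℝ := lam / 2 with hμdef
  have hμ : 0 < μ := by positivity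
  set K : ℝ := ∑' j : ℤ, Real.exp (-μ * |(j : ℝ)|) with hKdef
  have hK1 : 1 ≤ K := one_le_K hμ
  intro n
  induction n with
  | zero =>
    intro k l
    rw [pow_zero, pow_zero, one_mul, ent_one]
    by_cases h : k = l
    · subst h
      simp
    · simp only [if_neg h, norm_zero]
      positivity
  | succ n ih =>
    intro k l
    rw [pow_succ]
    set c₀ : ℝ := d * (d * K) ^ n * Real.exp (-μ * |(k : ℝ) - (l : ℝ)|) with hc₀
    have hg : HasSum (fun m : ℤ => c₀ * Real.exp (-μ * |(l : ℝ) - (m : ℝ)|)) (c₀ * K) :=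
      (hasSum_exp_shift hμ l).mul_left c₀
    have hb : ∀ m : ℤ, ‖ent (S ^ n) k m * ent S m l‖
        ≤ c₀ * Real.exp (-μ * |(l : ℝ) - (m : ℝ)|) := by
      intro m
      rw [norm_mul]
      have h1 := ih k m
      have h2 := hS m l
      have hsplit : Real.exp (-lam * |(m : ℝ) - (l : ℝ)|)
          = Real.exp (-μ * |(m : ℝ) - (l : ℝ)|) * Real.exp (-μ * |(m : ℝ) - (l : ℝ)|) := by
        rw [← Real.exp_add]
        congr 1
        rw [hμdef]; ring
      have htri : Real.exp (-μ * |(k : ℝ) - (m : ℝ)|) * Real.exp (-μ * |(m : ℝ) - (l : ℝ)|)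
          ≤ Real.exp (-μ * |(k : ℝ) - (l : ℝ)|) := by
        rw [← Real.exp_add]
        apply Real.exp_le_exp.mpr
        have := abs_sub_le ((k : ℝ)) ((m : ℝ)) ((l : ℝ))
        nlinarith [hμ.le]
      have hcomm : |(m : ℝ) - (l : ℝ)| = |(l : ℝ) - (m : ℝ)| := abs_sub_comm _ _
      calc ‖ent (S ^ n) k m‖ * ‖ent S m l‖
          ≤ ((d * K) ^ n * Real.exp (-μ * |(k : ℝ) - (m : ℝ)|))
            * (d * Real.exp (-lam * |(m : ℝ) - (l : ℝ)|)) := by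
            apply mul_le_mul h1 h2 (norm_nonneg _)
            positivity
        _ = d * (d * K) ^ n
            * (Real.exp (-μ * |(k : ℝ) - (m : ℝ)|) * Real.exp (-μ * |(m : ℝ) - (l : ℝ)|))
            * Real.exp (-μ * |(m : ℝ) - (l : ℝ)|) := by
            rw [hsplit]; ring
        _ ≤ d * (d * K) ^ n * Real.exp (-μ * |(k : ℝ) - (l : ℝ)|)
            * Real.exp (-μ * |(m : ℝ) - (l : ℝ)|) := by
            apply mul_le_mul_of_nonneg_right _ (Real.exp_pos _).le
            apply mul_le_mul_of_nonneg_left htri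
            positivity
        _ = c₀ * Real.exp (-μ * |(l : ℝ) - (m : ℝ)|) := by rw [hc₀, hcomm]
    have hmain := tsum_of_norm_bounded hg hb
    rw [(hasSum_ent_mul (S ^ n) S k l).tsum_eq] at hmain
    calc ‖ent (S ^ n * S) k l‖ ≤ c₀ * K := hmain
      _ = (d * K) ^ (n + 1) * Real.exp (-μ * |(k : ℝ) - (l : ℝ)|) := by
          rw [hc₀, pow_succ]; ring

end JaffardAux

end JaffardAux

section Main

open JaffardAux

/-- Jaffard-type: A bounded, boundedly invertible, self-adjoint
positive definite bi-infinite matrix with exponential off-diagonal decay has an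
inverse with exponential off-diagonal decay, with constants depending only on
λ, D, A, B. -/
theorem jaffard_exponential_inverse_decay
    (T : lp (fun _ : ℤ => ℂ) 2 →L[ℂ] lp (fun _ : ℤ => ℂ) 2)
    (hsa : IsSelfAdjoint T)
    (A B D lam : ℝ) (hA : 0 < A) (hlam : 0 < lam)
    (hlow : ∀ f, A * ‖f‖ ^ 2 ≤ (inner ℂ (T f) f : ℂ).re)
    (hup : ∀ f, (inner ℂ (T f) f : ℂ).re ≤ B * ‖f‖ ^ 2)
    (hdecay : ∀ k l : ℤ,
      ‖(inner ℂ (T (lp.single 2 l (1 : ℂ))) (lp.single 2 k (1 : ℂ)) : ℂ)‖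
        ≤ D * Real.exp (-lam * |(k : ℝ) - (l : ℝ)|)) :
    ∃ lam₂ C₂ : ℝ, 0 < lam₂ ∧
      ∃ Tinv : lp (fun _ : ℤ => ℂ) 2 →L[ℂ] lp (fun _ : ℤ => ℂ) 2,
        Tinv.comp T = ContinuousLinearMap.id ℂ _ ∧
        T.comp Tinv = ContinuousLinearMap.id ℂ _ ∧
        ∀ k l : ℤ,
          ‖(inner ℂ (Tinv (lp.single 2 l (1 : ℂ))) (lp.single 2 k (1 : ℂ)) : ℂ)‖
            ≤ C₂ * Real.exp (-lam₂ * |(k : ℝ) - (l : ℝ)|) := by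
  classical
  -- basic constants
  have hee : ∀ i : ℤ, lp.single 2 i (1 : ℂ) = ee i := fun _ => rfl
  have hAN : A ≤ ‖T‖ := by
    have h0 := hlow (ee 0)
    have h1 : ((inner ℂ (T (ee 0)) (ee 0) : ℂ)).re ≤ ‖(inner ℂ (T (ee 0)) (ee 0) : ℂ)‖ := by
      calc ((inner ℂ (T (ee 0)) (ee 0) : ℂ)).re ≤ |((inner ℂ (T (ee 0)) (ee 0) : ℂ)).re| :=
            le_abs_self _
        _ ≤ ‖(inner ℂ (T (ee 0)) (ee 0) : ℂ)‖ := Complex.abs_re_le_norm _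
    have h2 : ‖(inner ℂ (T (ee 0)) (ee 0) : ℂ)‖ ≤ ‖T (ee 0)‖ * ‖ee 0‖ := norm_inner_le_norm _ _
    have h3 : ‖T (ee 0)‖ ≤ ‖T‖ * ‖ee 0‖ := T.le_opNorm _
    have h4 : ‖ee 0‖ = 1 := norm_ee 0
    rw [h4, mul_one] at h2 h3
    rw [h4] at h0
    nlinarith
  have hN : 0 < ‖T‖ := lt_of_lt_of_le hA hAN
  have htpos0 : 0 < A / ‖T‖ ^ 2 := div_pos hA (by positivity)
  have hqS0 := norm_one_sub_smul_le T A hA hlow hN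
  have hq00 : 0 ≤ 1 - A ^ 2 / ‖T‖ ^ 2 := by
    have h5 : A ^ 2 ≤ ‖T‖ ^ 2 := by nlinarith
    have h6 : A ^ 2 / ‖T‖ ^ 2 ≤ 1 := by
      rw [div_le_one (by positivity)]; exact h5
    linarith
  have hqlt0 : Real.sqrt (1 - A ^ 2 / ‖T‖ ^ 2) < 1 := by
    have h7 : 1 - A ^ 2 / ‖T‖ ^ 2 < 1 := by
      have : 0 < A ^ 2 / ‖T‖ ^ 2 := by positivity
      linarith
    calc Real.sqrt (1 - A ^ 2 / ‖T‖ ^ 2) < Real.sqrt 1 := Real.sqrt_lt_sqrt hq00 h7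
      _ = 1 := Real.sqrt_one
  set t : ℝ := A / ‖T‖ ^ 2 with htdef
  have htpos : 0 < t := htpos0
  set S : H →L[ℂ] H := (1 : H →L[ℂ] H) - ((t : ℝ) : ℂ) • T with hSdef
  set q : ℝ := Real.sqrt (1 - A ^ 2 / ‖T‖ ^ 2) with hqdef
  have hqS : ‖S‖ ≤ q := hqS0
  have hqlt : q < 1 := hqlt0
  set q' : ℝ := max q (1 / 2) with hq'def
  have hq'lt : q' < 1 := max_lt hqlt (by norm_num)
  have hq'pos : (0 : ℝ) < q' := lt_of_lt_of_le (by norm_num) (le_max_right q (1 / 2))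
  have hSq' : ‖S‖ ≤ q' := hqS.trans (le_max_left _ _)
  have hS1 : ‖S‖ < 1 := lt_of_le_of_lt hSq' hq'lt
  -- D is nonnegative
  have hD0 : 0 ≤ D := by
    have h8 := hdecay 0 0
    have h9 : (0 : ℝ) ≤ ‖(inner ℂ (T (lp.single 2 (0 : ℤ) (1 : ℂ)))
        (lp.single 2 (0 : ℤ) (1 : ℂ)) : ℂ)‖ := norm_nonneg _
    simp only [Int.cast_zero, sub_zero, abs_zero, mul_zero, Real.exp_zero, mul_one] at h8
    linarith
  set d : ℝ := 1 + t * D with hddef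
  have hd1 : 1 ≤ d := by nlinarith
  -- entrywise bound for S
  have hentS : ∀ k l : ℤ, ‖ent S k l‖ ≤ d * Real.exp (-lam * |(k : ℝ) - (l : ℝ)|) := by
    intro k l
    have hT : ‖ent T k l‖ ≤ D * Real.exp (-lam * |(k : ℝ) - (l : ℝ)|) := by
      have := hdecay k l
      rw [hee, hee, norm_inner_ent] at this
      exact this
    have hone : ‖ent (1 : H →L[ℂ] H) k l‖ ≤ Real.exp (-lam * |(k : ℝ) - (l : ℝ)|) := by
      rw [ent_one]
      by_cases h : k = l
      · subst h; simp
      · simp only [if_neg h, norm_zero]; positivity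
    rw [hSdef, ent_sub, ent_smul]
    calc ‖ent 1 k l - (t : ℂ) * ent T k l‖
        ≤ ‖ent (1 : H →L[ℂ] H) k l‖ + ‖(t : ℂ) * ent T k l‖ := norm_sub_le _ _
      _ = ‖ent (1 : H →L[ℂ] H) k l‖ + t * ‖ent T k l‖ := by
          rw [norm_mul, Complex.norm_real, Real.norm_eq_abs, abs_of_pos htpos]
      _ ≤ Real.exp (-lam * |(k : ℝ) - (l : ℝ)|)
          + t * (D * Real.exp (-lam * |(k : ℝ) - (l : ℝ)|)) :=
          add_le_add hone (mul_le_mul_of_nonneg_left hT htpos.le)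
      _ = d * Real.exp (-lam * |(k : ℝ) - (l : ℝ)|) := by rw [hddef]; ring
  -- power bounds
  have hpow := ent_pow_bound S d lam hd1 hlam hentS
  set μ : ℝ := lam / 2 with hμdef
  have hμ : 0 < μ := by positivity
  set K : ℝ := ∑' j : ℤ, Real.exp (-μ * |(j : ℝ)|) with hKdef
  have hK1 : 1 ≤ K := one_le_K hμ
  set ρ : ℝ := d * K with hρdef
  have hρ1 : 1 ≤ ρ := by nlinarith
  have hρpos : (0 : ℝ) < ρ := lt_of_lt_of_le one_pos hρ1
  -- interpolation exponent
  set L₁ : ℝ := -Real.log q' with hL₁def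
  have hL₁pos : 0 < L₁ := by
    have := Real.log_neg hq'pos hq'lt
    rw [hL₁def]; linarith
  set L₂ : ℝ := Real.log ρ with hL₂def
  have hL₂0 : 0 ≤ L₂ := Real.log_nonneg hρ1
  set θ : ℝ := L₁ / (2 * (L₁ + L₂)) with hθdef
  have hθpos : 0 < θ := div_pos hL₁pos (by linarith)
  have hθle : θ ≤ 1 := by
    rw [hθdef, div_le_one (by linarith)]; linarith
  have hθeq : θ * (L₁ + L₂) = L₁ / 2 := by
    rw [hθdef]; field_simp
  set r0 : ℝ := q' ^ (1 - θ) * ρ ^ θ with hr0def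
  have hr0pos : 0 < r0 :=
    mul_pos (Real.rpow_pos_of_pos hq'pos _) (Real.rpow_pos_of_pos hρpos _)
  have hr0lt : r0 < 1 := by
    have hlog : Real.log r0 = (1 - θ) * Real.log q' + θ * Real.log ρ := by
      rw [hr0def, Real.log_mul (ne_of_gt (Real.rpow_pos_of_pos hq'pos _))
        (ne_of_gt (Real.rpow_pos_of_pos hρpos _)), Real.log_rpow hq'pos, Real.log_rpow hρpos]
    have hlq : Real.log q' = -L₁ := by rw [hL₁def]; ring
    have : Real.log r0 < 0 := by
      rw [hlog, hlq, ← hL₂def]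
      nlinarith
    exact (Real.log_neg_iff hr0pos).mp this
  -- per-term bound
  have hminb : ∀ (n : ℕ) (k l : ℤ), ‖ent (S ^ n) k l‖
      ≤ r0 ^ n * Real.exp (-(θ * μ) * |(k : ℝ) - (l : ℝ)|) := by
    intro n k l
    have hb1 : ‖ent (S ^ n) k l‖ ≤ q' ^ n := by
      rcases Nat.eq_zero_or_pos n with hn | hn
      · subst hn
        rw [pow_zero, pow_zero, ent_one]
        by_cases h : k = l <;> simp [h]
      · calc ‖ent (S ^ n) k l‖ ≤ ‖S ^ n‖ := norm_ent_le _ _ _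
          _ ≤ ‖S‖ ^ n := norm_pow_le' S hn
          _ ≤ q' ^ n := pow_le_pow_left₀ (norm_nonneg _) hSq' n
    have hb2 : ‖ent (S ^ n) k l‖
        ≤ ρ ^ n * Real.exp (-μ * |(k : ℝ) - (l : ℝ)|) := hpow n k l
    have hmin := le_min hb1 hb2
    have hinterp := min_le_rpow_interp (x := q' ^ n)
      (y := ρ ^ n * Real.exp (-μ * |(k : ℝ) - (l : ℝ)|))
      (pow_nonneg hq'pos.le n) (by positivity) hθpos.le hθle
    have hrhs : ((q' ^ n : ℝ)) ^ (1 - θ)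
        * ((ρ ^ n * Real.exp (-μ * |(k : ℝ) - (l : ℝ)|)) ^ θ)
        = r0 ^ n * Real.exp (-(θ * μ) * |(k : ℝ) - (l : ℝ)|) := by
      rw [Real.mul_rpow (by positivity) (by positivity)]
      rw [← Real.rpow_natCast q' n, ← Real.rpow_natCast ρ n,
        ← Real.rpow_mul hq'pos.le, ← Real.rpow_mul hρpos.le,
        mul_comm ((n : ℝ)) (1 - θ), mul_comm ((n : ℝ)) θ,
        Real.rpow_mul hq'pos.le, Real.rpow_mul hρpos.le,
        Real.rpow_natCast, Real.rpow_natCast, ← Real.exp_mul]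
      rw [hr0def, mul_pow]
      have harg : -μ * |(k : ℝ) - (l : ℝ)| * θ = -(θ * μ) * |(k : ℝ) - (l : ℝ)| := by ring
      rw [harg]
      ring
    calc ‖ent (S ^ n) k l‖
        ≤ min (q' ^ n) (ρ ^ n * Real.exp (-μ * |(k : ℝ) - (l : ℝ)|)) := hmin
      _ ≤ ((q' ^ n : ℝ)) ^ (1 - θ)
          * ((ρ ^ n * Real.exp (-μ * |(k : ℝ) - (l : ℝ)|)) ^ θ) := hinterp
      _ = r0 ^ n * Real.exp (-(θ * μ) * |(k : ℝ) - (l : ℝ)|) := hrhs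
  -- Neumann series inverse
  have hsummable : Summable (fun n : ℕ => S ^ n) := summable_geometric_of_norm_lt_one hS1
  set U : (H →L[ℂ] H)ˣ := Units.oneSub S hS1 with hUdef
  set Tinv : H →L[ℂ] H := ((t : ℝ) : ℂ) • (↑U⁻¹ : H →L[ℂ] H) with hTinvdef
  have hcT : ((t : ℝ) : ℂ) • T = (U : H →L[ℂ] H) := by
    rw [hUdef, Units.val_oneSub, hSdef, sub_sub_cancel]
  have hleft : Tinv * T = 1 := by
    have h10 : (↑U⁻¹ : H →L[ℂ] H) * (((t : ℝ) : ℂ) • T) = 1 := by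
      rw [hcT]; exact U.inv_mul
    calc Tinv * T = ((t : ℝ) : ℂ) • ((↑U⁻¹ : H →L[ℂ] H) * T) := by
          rw [hTinvdef, smul_mul_assoc]
      _ = (↑U⁻¹ : H →L[ℂ] H) * (((t : ℝ) : ℂ) • T) := by rw [mul_smul_comm]
      _ = 1 := h10
  have hright : T * Tinv = 1 := by
    have h11 : (((t : ℝ) : ℂ) • T) * (↑U⁻¹ : H →L[ℂ] H) = 1 := by
      rw [hcT]; exact U.mul_inv
    calc T * Tinv = ((t : ℝ) : ℂ) • (T * (↑U⁻¹ : H →L[ℂ] H)) := by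
          rw [hTinvdef, mul_smul_comm]
      _ = (((t : ℝ) : ℂ) • T) * (↑U⁻¹ : H →L[ℂ] H) := by rw [smul_mul_assoc]
      _ = 1 := h11
  -- entry sums for the inverse
  have hinv_eq : (↑U⁻¹ : H →L[ℂ] H) = ∑' n : ℕ, S ^ n := rfl
  have hentsum : ∀ k l : ℤ, HasSum (fun n : ℕ => ent (S ^ n) k l)
      (ent (↑U⁻¹ : H →L[ℂ] H) k l) := by
    intro k l
    have h1 : HasSum (fun n : ℕ => (S ^ n) (ee l)) ((↑U⁻¹ : H →L[ℂ] H) (ee l)) := by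
      rw [hinv_eq]
      exact (ContinuousLinearMap.apply ℂ H (ee l)).hasSum hsummable.hasSum
    have h2 := (innerSL ℂ (ee k)).hasSum h1
    simp only [innerSL_apply_apply, inner_ee_left] at h2
    exact h2
  -- conclusion
  refine ⟨θ * μ, t * (1 - r0)⁻¹, mul_pos hθpos hμ, Tinv, ?_, ?_, ?_⟩
  · rw [← ContinuousLinearMap.mul_def, ← ContinuousLinearMap.one_def]
    exact hleft
  · rw [← ContinuousLinearMap.mul_def, ← ContinuousLinearMap.one_def]
    exact hright
  · intro k l
    have hfin : HasSum (fun n : ℕ => r0 ^ n * Real.exp (-(θ * μ) * |(k : ℝ) - (l : ℝ)|))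
        ((1 - r0)⁻¹ * Real.exp (-(θ * μ) * |(k : ℝ) - (l : ℝ)|)) :=
      (hasSum_geometric_of_lt_one hr0pos.le hr0lt).mul_right _
    have h5 := tsum_of_norm_bounded hfin (fun n => hminb n k l)
    rw [(hentsum k l).tsum_eq] at h5
    have hnrm : ‖(inner ℂ (Tinv (lp.single 2 l (1 : ℂ))) (lp.single 2 k (1 : ℂ)) : ℂ)‖
        = t * ‖ent (↑U⁻¹ : H →L[ℂ] H) k l‖ := by
      rw [hee, hee, norm_inner_ent, hTinvdef, ent_smul, norm_mul, Complex.norm_real,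
        Real.norm_eq_abs, abs_of_pos htpos]
    rw [hnrm]
    calc t * ‖ent (↑U⁻¹ : H →L[ℂ] H) k l‖
        ≤ t * ((1 - r0)⁻¹ * Real.exp (-(θ * μ) * |(k : ℝ) - (l : ℝ)|)) :=
          mul_le_mul_of_nonneg_left h5 htpos.le
      _ = t * (1 - r0)⁻¹ * Real.exp (-(θ * μ) * |(k : ℝ) - (l : ℝ)|) := by ring

end Main
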